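/- Let N : ℕ → ℤ² → ℝ satisfy the 2D discrete total-population recursion, and suppose the initial deviation is bounded: D := sup_{(j,ℓ)∈ℤ²} |N_{j,ℓ}^0 − Λ/μ| < ∞. Set ρ = (1 + 4λr)/(1 + 4λr + φμ), so that 0 < ρ < 1. Then for all n ≥ 0 and all (j,ℓ) ∈ ℤ², |N_{j,ℓ}^n − Λ/μ| ≤ ρⁿ·D. In particular N_{j,ℓ}^n → Λ/μ as n → ∞, uniformly in (j,ℓ). -/

import Mathlib

/-- For the 2D discrete total-population recursion with bounded initial
deviation `D = sup_{(j,ℓ)} |N⁰_{j,ℓ} − Λ/μ|` and `ρ = (1 + 4λr)/(1 + 4λr + φμ)`, one has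
`0 < ρ < 1` and `|Nⁿ_{j,ℓ} − Λ/μ| ≤ ρⁿ·D`; in particular `Nⁿ_{j,ℓ} → Λ/μ` uniformly
in `(j,ℓ)`. -/
theorem nsfd2d_total_population_geometric_convergence
    (Λ μ lam k φ h r : ℝ)
    (hΛ : 0 ≤ Λ) (hμ : 0 < μ) (hlam : 0 ≤ lam)
    (hk : 0 < k) (hφ : 0 < φ) (hh : 0 < h) (hr : r = φ / h ^ 2)
    (N : ℕ → ℤ → ℤ → ℝ)
    (hN : ∀ n j l, (N (n + 1) j l - N n j l) / φ =
      lam * (N n (j + 1) l + N n (j - 1) l + N n j (l + 1) + N n j (l - 1)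
          - 4 * N (n + 1) j l) / h ^ 2 + Λ - μ * N (n + 1) j l)
    (hbdd : BddAbove (Set.range fun jl : ℤ × ℤ => |N 0 jl.1 jl.2 - Λ / μ|))
    (D : ℝ) (hD : D = ⨆ jl : ℤ × ℤ, |N 0 jl.1 jl.2 - Λ / μ|)
    (ρ : ℝ) (hρ : ρ = (1 + 4 * lam * r) / (1 + 4 * lam * r + φ * μ)) :
    (0 < ρ ∧ ρ < 1)
    ∧ (∀ n j l, |N n j l - Λ / μ| ≤ ρ ^ n * D)
    ∧ TendstoUniformly (fun (n : ℕ) (jl : ℤ × ℤ) => N n jl.1 jl.2) (fun _ => Λ / μ)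
        Filter.atTop := by
  have hr0 : 0 ≤ r := by rw [hr]; positivity
  have hlr : 0 ≤ lam * r := mul_nonneg hlam hr0
  have hnum : 0 < 1 + 4 * lam * r := by nlinarith
  have hden : 0 < 1 + 4 * lam * r + φ * μ := by nlinarith
  have hρ0 : 0 < ρ := by rw [hρ]; positivity
  have hρ1 : ρ < 1 := by
    rw [hρ, div_lt_one hden]; nlinarith
  -- the error recursion
  have hE : ∀ n j l, N (n + 1) j l - Λ / μ =
      ((N n j l - Λ / μ) + lam * r * ((N n (j + 1) l - Λ / μ) + (N n (j - 1) l - Λ / μ)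
        + (N n j (l + 1) - Λ / μ) + (N n j (l - 1) - Λ / μ))) / (1 + 4 * lam * r + φ * μ) := by
    intro n j l
    have h2 := hN n j l
    rw [eq_div_iff hden.ne']
    subst hr
    have hh2 : (h : ℝ) ^ 2 ≠ 0 := by positivity
    field_simp at h2 ⊢
    linear_combination μ * h2
  have hD0 : 0 ≤ D := by
    rw [hD]
    exact le_trans (abs_nonneg _) (le_ciSup hbdd ((0 : ℤ), (0 : ℤ)))
  -- geometric bound
  have main : ∀ n j l, |N n j l - Λ / μ| ≤ ρ ^ n * D := by
    intro n
    induction n with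
    | zero =>
      intro j l
      simpa [hD] using le_ciSup hbdd ((j, l) : ℤ × ℤ)
    | succ n ih =>
      intro j l
      rw [hE n j l, abs_div, abs_of_pos hden]
      rw [div_le_iff₀ hden]
      have h1 := ih j l
      have h2 := ih (j + 1) l
      have h3 := ih (j - 1) l
      have h4 := ih j (l + 1)
      have h5 := ih j (l - 1)
      have habs : |(N n j l - Λ / μ) + lam * r * ((N n (j + 1) l - Λ / μ)
            + (N n (j - 1) l - Λ / μ) + (N n j (l + 1) - Λ / μ) + (N n j (l - 1) - Λ / μ))|
          ≤ ρ ^ n * D + lam * r * (4 * (ρ ^ n * D)) := by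
        calc |(N n j l - Λ / μ) + lam * r * ((N n (j + 1) l - Λ / μ)
              + (N n (j - 1) l - Λ / μ) + (N n j (l + 1) - Λ / μ) + (N n j (l - 1) - Λ / μ))|
            ≤ |N n j l - Λ / μ| + lam * r * |(N n (j + 1) l - Λ / μ)
              + (N n (j - 1) l - Λ / μ) + (N n j (l + 1) - Λ / μ) + (N n j (l - 1) - Λ / μ)| := by
              calc _ ≤ |N n j l - Λ / μ| + |lam * r * ((N n (j + 1) l - Λ / μ)
                    + (N n (j - 1) l - Λ / μ) + (N n j (l + 1) - Λ / μ)
                    + (N n j (l - 1) - Λ / μ))| := abs_add_le _ _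
                _ = _ := by rw [abs_mul, abs_of_nonneg hlr]
          _ ≤ ρ ^ n * D + lam * r * (4 * (ρ ^ n * D)) := by
              gcongr
              calc |(N n (j + 1) l - Λ / μ) + (N n (j - 1) l - Λ / μ)
                    + (N n j (l + 1) - Λ / μ) + (N n j (l - 1) - Λ / μ)|
                  ≤ |N n (j + 1) l - Λ / μ| + |N n (j - 1) l - Λ / μ|
                    + |N n j (l + 1) - Λ / μ| + |N n j (l - 1) - Λ / μ| := by
                    calc _ ≤ |(N n (j + 1) l - Λ / μ) + (N n (j - 1) l - Λ / μ)
                          + (N n j (l + 1) - Λ / μ)| + |N n j (l - 1) - Λ / μ| := abs_add_le _ _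
                      _ ≤ _ := by
                          have := abs_add_three (N n (j + 1) l - Λ / μ)
                            (N n (j - 1) l - Λ / μ) (N n j (l + 1) - Λ / μ)
                          linarith
                _ ≤ 4 * (ρ ^ n * D) := by linarith
      have hrd : ρ ^ (n + 1) * D * (1 + 4 * lam * r + φ * μ)
          = (1 + 4 * lam * r) * (ρ ^ n * D) := by
        rw [pow_succ, hρ]; field_simp
      rw [hrd]
      nlinarith [habs]
  refine ⟨⟨hρ0, hρ1⟩, main, ?_⟩
  rw [Metric.tendstoUniformly_iff]
  intro ε hε
  have htend : Filter.Tendsto (fun n : ℕ => ρ ^ n * D) Filter.atTop (nhds 0) := by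
    have := tendsto_pow_atTop_nhds_zero_of_lt_one hρ0.le hρ1
    simpa using this.mul_const D
  have := (htend.eventually (gt_mem_nhds hε))
  filter_upwards [this] with n hn jl
  have := main n jl.1 jl.2
  rw [Real.dist_eq, abs_sub_comm]
  exact lt_of_le_of_lt this hn
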